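/- arXiv:2103.17216 — 4 statements merged into one kernel-verified Lean document; each statement's English description precedes it below -/
import Mathlib

section
/- Let π be a set of primes, let G and H be finite groups with H a π-group, and let f : G → H be a surjective group homomorphism. Then there exists a π-subgroup M of G with f(M) = H. -/
/-- A subgroup `H` of `G` is intravariant if every automorphism of `G` maps `H`
to a conjugate of `H`. -/
def IsIntravariant {G : Type*} [Group G] (H : Subgroup G) : Prop :=
  ∀ a : MulAut G, ∃ g : G,
    H.map a.toMonoidHom = H.map (MulAut.conj g).toMonoidHom

/-- A group is a `π`-group if every prime dividing its order lies in `π`. -/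
def IsPiGroup (π : Set ℕ) (H : Type*) [Group H] : Prop :=
  ∀ p : ℕ, p.Prime → p ∣ Nat.card H → p ∈ π

theorem exists_pi_subgroup_mapping_onto
    (π : Set ℕ) (hπ : ∀ p ∈ π, p.Prime) (G H : Type*) [Group G] [Finite G]
    [Group H] [Finite H] (f : G →* H) (hf : Function.Surjective f)
    (hH : IsPiGroup π H) :
    ∃ M : Subgroup G, IsPiGroup π ↥M ∧ M.map f = ⊤ := by
  suffices h : ∀ n : ℕ, ∀ M : Subgroup G, Nat.card M < n → M.map f = ⊤ →
      ∃ M' : Subgroup G, IsPiGroup π ↥M' ∧ M'.map f = ⊤ by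
    refine h (Nat.card (⊤ : Subgroup G) + 1) ⊤ (Nat.lt_succ_self _) ?_
    rw [← MonoidHom.range_eq_map, MonoidHom.range_eq_top]
    exact hf
  intro n
  induction n with
  | zero => exact fun M hM _ => absurd hM (by simp [Nat.card_pos.le])
  | succ n ih =>
    intro M hMcard hMtop
    by_cases hM : IsPiGroup π ↥M
    · exact ⟨M, hM, hMtop⟩
    · -- pick a bad prime
      simp only [IsPiGroup, not_forall] at hM
      obtain ⟨p, hp, hpM, hpπ⟩ := hM
      haveI : Fact p.Prime := ⟨hp⟩
      have hpH : ¬ p ∣ Nat.card H := fun h => hpπ (hH p hp h)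
      set f' : M →* H := f.comp M.subtype with hf'
      have hf'range : f'.range = ⊤ := by
        rw [hf', MonoidHom.range_comp, Subgroup.range_subtype, hMtop]
      -- Sylow p-subgroup of M lies in ker f'
      obtain ⟨P⟩ : Nonempty (Sylow p M) := inferInstance
      have hPker : (P : Subgroup M) ≤ f'.ker := by
        rw [← Subgroup.map_eq_bot_iff]
        have hpg : IsPGroup p ((P : Subgroup M).map f') := P.2.map f'
        obtain ⟨k, hk⟩ := IsPGroup.iff_card.mp hpg
        rcases Nat.eq_zero_or_pos k with rfl | hkpos
        · exact Subgroup.card_eq_one.mp (by rw [hk, pow_zero])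
        · exfalso
          apply hpH
          calc p ∣ p ^ k := dvd_pow_self p hkpos.ne'
          _ = Nat.card ((P : Subgroup M).map f') := hk.symm
          _ ∣ Nat.card H := Subgroup.card_subgroup_dvd_card _
      have hker_map : f'.ker.map f' = ⊥ := (Subgroup.map_eq_bot_iff _).mpr le_rfl
      -- key: produce a strictly smaller subgroup of G mapping onto H
      have key : ∀ C : Subgroup M, Nat.card C < Nat.card M → C.map f' = ⊤ →
          ∃ M' : Subgroup G, IsPiGroup π ↥M' ∧ M'.map f = ⊤ := by
        intro C hClt hCtop
        refine ih (C.map M.subtype) ?_ ?_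
        · have : Nat.card (C.map M.subtype) = Nat.card C :=
            (Nat.card_congr (C.equivMapOfInjective M.subtype M.subtype_injective).toEquiv).symm
          omega
        · rw [Subgroup.map_map, ← hf', hCtop]
      by_cases hnorm : Subgroup.normalizer ((P : Subgroup M) : Set M) = ⊤
      · -- P is normal; Schur–Zassenhaus complement
        haveI : (P : Subgroup M).Normal := Subgroup.normalizer_eq_top_iff.mp hnorm
        obtain ⟨C, hC⟩ :=
          Subgroup.exists_right_complement'_of_coprime (N := (P : Subgroup M))
            P.card_coprime_index
        refine key C ?_ ?_
        · have hmul := hC.card_mul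
          have hPbig : 1 < Nat.card (P : Subgroup M) := by
            have := P.ne_bot_of_dvd_card hpM
            have h1 : Nat.card (P : Subgroup M) ≠ 1 := fun h =>
              this (Subgroup.card_eq_one.mp h)
            have := Nat.card_pos (α := (P : Subgroup M))
            omega
          have hCpos := Nat.card_pos (α := C)
          calc Nat.card C < Nat.card (P : Subgroup M) * Nat.card C := by
                exact lt_mul_of_one_lt_left hCpos hPbig
          _ = Nat.card M := hmul
        · have hsup : (P : Subgroup M) ⊔ C = ⊤ := hC.sup_eq_top
          have : ((P : Subgroup M) ⊔ C).map f' = ⊤ := by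
            rw [hsup, ← MonoidHom.range_eq_map, hf'range]
          rwa [Subgroup.map_sup, (Subgroup.map_eq_bot_iff _).mpr
            (hPker), bot_sup_eq] at this
      · -- normalizer is proper; Frattini argument
        set N' := Subgroup.normalizer ((P : Subgroup M) : Set M) with hN'
        have hfrat : N' ⊔ f'.ker = ⊤ := Sylow.normalizer_sup_eq_top' P hPker
        refine key N' ?_ ?_
        · refine lt_of_le_of_ne (Nat.le_of_dvd Nat.card_pos
            (Subgroup.card_subgroup_dvd_card N')) fun h => hnorm ?_
          exact Subgroup.eq_top_of_card_eq _ h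
        · have : (N' ⊔ f'.ker).map f' = ⊤ := by
            rw [hfrat, ← MonoidHom.range_eq_map, hf'range]
          rwa [Subgroup.map_sup, hker_map, sup_bot_eq] at this
end

section
/- Let π be a set of primes, let G and H be finite groups with H a π-group, and let f : G → H be a surjective group homomorphism with kernel K. Let J be an intravariant π-subgroup of K. Then there exists a π-subgroup M of G with J ≤ M and f(M) = H. -/
section Aux

open Subgroup

universe u v

private lemma pi_of_mul {π : Set ℕ} {a b : ℕ}
    (ha : ∀ p : ℕ, p.Prime → p ∣ a → p ∈ π) (hb : ∀ p : ℕ, p.Prime → p ∣ b → p ∈ π) :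
    ∀ p : ℕ, p.Prime → p ∣ a * b → p ∈ π := fun p hp hd =>
  ((Nat.Prime.dvd_mul hp).mp hd).elim (ha p hp) (hb p hp)

private lemma card_comap_of_surjective {G H : Type*} [Group G] [Group H] [Finite G]
    (φ : G →* H) (hφ : Function.Surjective φ) (S : Subgroup H) :
    Nat.card ↥(S.comap φ) = Nat.card ↥S * Nat.card ↥φ.ker := by
  have hker : φ.ker ≤ S.comap φ := fun x hx => by
    simp only [Subgroup.mem_comap, MonoidHom.mem_ker.mp hx, S.one_mem]
  set ψ := φ.comp (S.comap φ).subtype with hψ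
  have hrange : ψ.range = S := by
    rw [hψ, MonoidHom.range_comp, Subgroup.range_subtype,
      Subgroup.map_comap_eq_self_of_surjective hφ]
  have h1 : Nat.card ↥(S.comap φ) = Nat.card (↥(S.comap φ) ⧸ ψ.ker) * Nat.card ψ.ker :=
    Subgroup.card_eq_card_quotient_mul_card_subgroup _
  rw [h1]
  congr 1
  · rw [Nat.card_congr (QuotientGroup.quotientKerEquivRange ψ).toEquiv, hrange]
  · have : ψ.ker = φ.ker.subgroupOf (S.comap φ) := rfl
    rw [this, Nat.card_congr (Subgroup.subgroupOfEquivOfLe hker).toEquiv]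

private lemma aux (π : Set ℕ) : ∀ (n : ℕ) (G : Type u) (H : Type v) [Group G] [Finite G]
    [Group H] [Finite H] (f : G →* H), Function.Surjective f → IsPiGroup π H →
    Nat.card G = n → ∃ M : Subgroup G, IsPiGroup π ↥M ∧ M.map f = ⊤ := by
  intro n
  induction n using Nat.strong_induction_on with
  | _ n IH =>
  intro G H _ _ _ _ f hf hH hn
  by_cases hK : f.ker = ⊥
  · refine ⟨⊤, ?_, by rw [← Subgroup.map_top_of_surjective f hf]⟩
    have hinj : Function.Injective f := (MonoidHom.ker_eq_bot_iff f).mp hK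
    have hcard : Nat.card G = Nat.card H :=
      Nat.card_eq_of_bijective f ⟨hinj, hf⟩
    intro p hp hd
    rw [Subgroup.card_top, hcard] at hd
    exact hH p hp hd
  · have hcardK : 1 < Nat.card ↥f.ker := (Subgroup.one_lt_card_iff_ne_bot _).mpr hK
    set p := (Nat.card ↥f.ker).minFac with hpdef
    have hp : p.Prime := Nat.minFac_prime (by omega)
    have hpd : p ∣ Nat.card ↥f.ker := Nat.minFac_dvd _
    haveI : Fact p.Prime := ⟨hp⟩
    obtain ⟨P⟩ := (Sylow.nonempty : Nonempty (Sylow p ↥f.ker))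
    set Q : Subgroup G := (P : Subgroup ↥f.ker).map f.ker.subtype with hQdef
    have hQK : Q ≤ f.ker := Subgroup.map_subtype_le _
    have hcardP : Nat.card ↥(P : Subgroup ↥f.ker)
        = p ^ (Nat.card ↥f.ker).factorization p := Sylow.card_eq_multiplicity P
    have hcardQ : Nat.card ↥Q = p ^ (Nat.card ↥f.ker).factorization p := by
      rw [hQdef, ← Nat.card_congr
        ((P : Subgroup ↥f.ker).equivMapOfInjective f.ker.subtype
          (Subgroup.subtype_injective _)).toEquiv]
      exact hcardP
    have hkpos : (Nat.card ↥f.ker).factorization p ≠ 0 := by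
      have := (Nat.Prime.factorization_pos_of_dvd hp (by positivity) hpd)
      omega
    have hQ1 : 1 < Nat.card ↥Q := by
      rw [hcardQ]
      exact Nat.one_lt_pow hkpos hp.one_lt
    have hfr : Subgroup.normalizer (Q : Set G) ⊔ f.ker = ⊤ := Sylow.normalizer_sup_eq_top P
    by_cases hN : Subgroup.normalizer (Q : Set G) = ⊤
    · -- Q is normal in G; pass to the quotient
      haveI hQnorm : Q.Normal := Subgroup.normalizer_eq_top_iff.mp hN
      have hQker : Q ≤ f.ker := hQK
      set f' : G ⧸ Q →* H := QuotientGroup.lift Q f hQker with hf'def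
      have hf' : Function.Surjective f' := fun h => by
        obtain ⟨g, hg⟩ := hf h
        exact ⟨QuotientGroup.mk g, by rwa [hf'def, QuotientGroup.lift_mk]⟩
      have hlt : Nat.card (G ⧸ Q) < n := by
        have h1 : Nat.card G = Nat.card (G ⧸ Q) * Nat.card ↥Q :=
          Subgroup.card_eq_card_quotient_mul_card_subgroup Q
        have h2 : 0 < Nat.card (G ⧸ Q) := Nat.card_pos
        calc Nat.card (G ⧸ Q) < Nat.card (G ⧸ Q) * Nat.card ↥Q :=
              (lt_mul_iff_one_lt_right (by omega)).mpr hQ1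
          _ = n := by omega
      obtain ⟨Mbar, hMbarpi, hMbartop⟩ := IH _ hlt (G ⧸ Q) H f' hf' hH rfl
      set M' : Subgroup G := Mbar.comap (QuotientGroup.mk' Q) with hM'def
      have hmapM' : M'.map (QuotientGroup.mk' Q) = Mbar :=
        Subgroup.map_comap_eq_self_of_surjective (QuotientGroup.mk'_surjective Q) _
      have hcomp : f'.comp (QuotientGroup.mk' Q) = f := by
        ext x
        simp [hf'def]
      have hM'f : M'.map f = ⊤ := by
        rw [← hcomp, ← Subgroup.map_map, hmapM', hMbartop]
      have hcardM' : Nat.card ↥M' = Nat.card ↥Mbar * Nat.card ↥Q := by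
        have := card_comap_of_surjective (QuotientGroup.mk' Q)
          (QuotientGroup.mk'_surjective Q) Mbar
        rwa [QuotientGroup.ker_mk'] at this
      by_cases hpπ : p ∈ π
      · refine ⟨M', ?_, hM'f⟩
        intro q hq hd
        rw [hcardM'] at hd
        refine pi_of_mul hMbarpi (fun q hq hd => ?_) q hq hd
        rw [hcardQ] at hd
        have h2 := hq.dvd_of_dvd_pow hd
        rw [Nat.prime_dvd_prime_iff_eq hq hp] at h2
        rwa [h2]
      · -- Schur–Zassenhaus inside M'
        have hQM' : Q ≤ M' := by
          intro x hx
          have : QuotientGroup.mk' Q x = 1 := by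
            rw [← MonoidHom.mem_ker, QuotientGroup.ker_mk']
            exact hx
          simp only [hM'def, Subgroup.mem_comap, this]
          exact Mbar.one_mem
        set N₀ : Subgroup ↥M' := Q.subgroupOf M' with hN₀def
        haveI : N₀.Normal := hQnorm.subgroupOf M'
        have hcardN₀ : Nat.card ↥N₀ = Nat.card ↥Q :=
          Nat.card_congr (Subgroup.subgroupOfEquivOfLe hQM').toEquiv
        have hidx : Nat.card ↥N₀ * N₀.index = Nat.card ↥M' := Subgroup.card_mul_index N₀
        have hQpos : 0 < Nat.card ↥Q := Nat.card_pos
        have hidxeq : N₀.index = Nat.card ↥Mbar := by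
          rw [hcardN₀, hcardM'] at hidx
          have := Nat.eq_of_mul_eq_mul_left hQpos (by linarith [hidx] : Nat.card ↥Q * N₀.index = Nat.card ↥Q * Nat.card ↥Mbar)
          omega
        have hpnd : ¬ p ∣ Nat.card ↥Mbar := fun hd => hpπ (hMbarpi p hp hd)
        have hcop : Nat.Coprime (Nat.card ↥N₀) N₀.index := by
          rw [hcardN₀, hcardQ, hidxeq]
          exact Nat.Coprime.pow_left _ ((Nat.Prime.coprime_iff_not_dvd hp).mpr hpnd)
        obtain ⟨C, hC⟩ := Subgroup.exists_right_complement'_of_coprime hcop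
        have hcardC : Nat.card ↥C = Nat.card ↥Mbar := by
          have := hC.card_mul_card
          rw [hcardN₀, hcardM'] at this
          have h3 : Nat.card ↥Q * Nat.card ↥C = Nat.card ↥Q * Nat.card ↥Mbar := by
            rw [this]; ring
          exact Nat.eq_of_mul_eq_mul_left hQpos h3
        refine ⟨C.map M'.subtype, ?_, ?_⟩
        · intro q hq hd
          rw [← Nat.card_congr (C.equivMapOfInjective M'.subtype
            (Subgroup.subtype_injective _)).toEquiv, hcardC] at hd
          exact hMbarpi q hq hd
        · rw [eq_top_iff]
          intro h _
          have : h ∈ M'.map f := hM'f ▸ Subgroup.mem_top h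
          obtain ⟨g, hg, hgf⟩ := this
          obtain ⟨⟨nn, cc⟩, hnc, -⟩ := hC.existsUnique (⟨g, hg⟩ : ↥M')
          have hnker : f ((nn : ↥M') : G) = 1 := by
            have h4 : ((nn : ↥M') : G) ∈ Q := Subgroup.mem_subgroupOf.mp nn.2
            exact MonoidHom.mem_ker.mp (hQK h4)
          have hgeq : g = ((nn : ↥M') : G) * ((cc : ↥M') : G) := by
            have := congrArg (fun x : ↥M' => (x : G)) hnc
            simpa using this.symm
          have : f (((cc : ↥M') : G)) = h := by
            rw [← hgf, hgeq, map_mul, hnker, one_mul]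
          refine ⟨((cc : ↥M') : G), ?_, this⟩
          exact ⟨(cc : ↥M'), cc.2, rfl⟩
    · -- the normalizer is a proper subgroup
      set N := Subgroup.normalizer (Q : Set G) with hNdef
      have hmapN : N.map f = ⊤ := by
        have h1 : (N ⊔ f.ker).map f = ⊤ := by
          rw [hfr, Subgroup.map_top_of_surjective f hf]
        rw [Subgroup.map_sup] at h1
        have h2 : f.ker.map f ≤ ⊥ := by
          rintro y ⟨x, hx, rfl⟩
          exact MonoidHom.mem_ker.mp hx
        rw [← h1]
        rw [sup_eq_left.mpr (le_trans h2 bot_le)]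
      set f₁ : ↥N →* H := f.comp N.subtype with hf₁def
      have hf₁ : Function.Surjective f₁ := by
        rw [← MonoidHom.range_eq_top, hf₁def, MonoidHom.range_comp,
          Subgroup.range_subtype, hmapN]
      have hlt : Nat.card ↥N < n := by
        rw [← hn]
        exact lt_of_le_of_ne N.card_le_card_group
          (fun h => hN (Subgroup.eq_top_of_card_eq N h))
      obtain ⟨C, hCpi, hCtop⟩ := IH _ hlt ↥N H f₁ hf₁ hH rfl
      refine ⟨C.map N.subtype, ?_, ?_⟩
      · intro q hq hd
        rw [← Nat.card_congr (C.equivMapOfInjective N.subtype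
          (Subgroup.subtype_injective _)).toEquiv] at hd
        exact hCpi q hq hd
      · rw [Subgroup.map_map, ← hf₁def, hCtop]

private lemma mem_normalizer_of_map_conj {G : Type*} [Group G] {H : Subgroup G} {x : G}
    (h : H.map (MulAut.conj x).toMonoidHom = H) : x ∈ Subgroup.normalizer (H : Set G) := by
  rw [Subgroup.mem_normalizer_iff]
  intro n
  constructor
  · intro hn
    rw [← h]
    exact ⟨n, hn, rfl⟩
  · intro hn
    rw [← h] at hn
    obtain ⟨m, hm, hmn⟩ := hn
    have hmm : (MulAut.conj x) m = (MulAut.conj x) n := by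
      simpa using hmn
    have : m = n := (MulAut.conj x).injective hmm
    exact this ▸ hm

private lemma map_conj_subtype {G : Type*} [Group G] (K : Subgroup G) [K.Normal]
    (J : Subgroup ↥K) (g : G) :
    (J.map (MulAut.conjNormal g).toMonoidHom).map K.subtype
      = (J.map K.subtype).map (MulAut.conj g).toMonoidHom := by
  rw [Subgroup.map_map, Subgroup.map_map]
  congr 1

private lemma intravariant_frattini {G : Type*} [Group G] (K : Subgroup G) [K.Normal]
    (J : Subgroup ↥K) (hJ : IsIntravariant J) :
    Subgroup.normalizer ((J.map K.subtype : Subgroup G) : Set G) ⊔ K = ⊤ := by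
  refine top_le_iff.mp fun g _ => ?_
  obtain ⟨k, hk⟩ := hJ (MulAut.conjNormal g)
  rw [← mul_inv_cancel_left (↑k : G) g, sup_comm]
  refine Subgroup.mul_mem_sup k.2 ?_
  apply mem_normalizer_of_map_conj
  have comp_eq : ∀ a b : G, (MulAut.conj (a * b)).toMonoidHom
      = (MulAut.conj a).toMonoidHom.comp (MulAut.conj b).toMonoidHom := by
    intro a b
    ext x
    simp [mul_assoc]
  have E1 : (J.map K.subtype).map (MulAut.conj g).toMonoidHom
      = (J.map K.subtype).map (MulAut.conj (↑k : G)).toMonoidHom := by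
    rw [← map_conj_subtype, ← map_conj_subtype, hk, MulAut.conjNormal_val]
  rw [comp_eq, ← Subgroup.map_map, E1, Subgroup.map_map, ← comp_eq, inv_mul_cancel]
  have h1 : (MulAut.conj (1 : G)).toMonoidHom = MonoidHom.id G := by
    ext x
    simp
  rw [h1, Subgroup.map_id]

end Aux

theorem exists_pi_subgroup_mapping_onto_containing_intravariant
    (π : Set ℕ) (hπ : ∀ p ∈ π, p.Prime) (G H : Type*) [Group G] [Finite G]
    [Group H] [Finite H] (f : G →* H) (hf : Function.Surjective f)
    (hH : IsPiGroup π H)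
    (J : Subgroup ↥f.ker) (hJint : IsIntravariant J) (hJpi : IsPiGroup π ↥J) :
    ∃ M : Subgroup G, IsPiGroup π ↥M ∧ J.map f.ker.subtype ≤ M ∧ M.map f = ⊤ := by
  classical
  set J' : Subgroup G := J.map f.ker.subtype with hJ'def
  have hfr : Subgroup.normalizer (J' : Set G) ⊔ f.ker = ⊤ := intravariant_frattini f.ker J hJint
  set N := Subgroup.normalizer (J' : Set G) with hNdef
  have hJ'N : J' ≤ N := Subgroup.le_normalizer
  have hJ'K : J' ≤ f.ker := Subgroup.map_subtype_le _
  set J₂ : Subgroup ↥N := J'.subgroupOf N with hJ₂def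
  haveI : J₂.Normal := Subgroup.normal_in_normalizer
  set f₁ : ↥N →* H := f.comp N.subtype with hf₁def
  have hJ₂ker : J₂ ≤ f₁.ker := by
    intro x hx
    have hxJ' : (x : G) ∈ J' := hx
    exact MonoidHom.mem_ker.mpr (MonoidHom.mem_ker.mp (hJ'K hxJ'))
  -- f restricted to N is surjective
  have hmapN : N.map f = ⊤ := by
    have h1 : (N ⊔ f.ker).map f = ⊤ := by
      rw [hfr, Subgroup.map_top_of_surjective f hf]
    rw [Subgroup.map_sup] at h1
    have h2 : f.ker.map f ≤ ⊥ := by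
      rintro y ⟨x, hx, rfl⟩
      exact MonoidHom.mem_ker.mp hx
    rw [← h1, sup_eq_left.mpr (le_trans h2 bot_le)]
  have hf₁ : Function.Surjective f₁ := by
    rw [← MonoidHom.range_eq_top, hf₁def, MonoidHom.range_comp,
      Subgroup.range_subtype, hmapN]
  set fbar : ↥N ⧸ J₂ →* H := QuotientGroup.lift J₂ f₁ hJ₂ker with hfbardef
  have hfbar : Function.Surjective fbar := fun h => by
    obtain ⟨g, hg⟩ := hf₁ h
    exact ⟨QuotientGroup.mk g, by rwa [hfbardef, QuotientGroup.lift_mk]⟩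
  obtain ⟨Mbar, hMbarpi, hMbartop⟩ := aux π (Nat.card (↥N ⧸ J₂)) (↥N ⧸ J₂) H fbar hfbar hH rfl
  set M₀ : Subgroup ↥N := Mbar.comap (QuotientGroup.mk' J₂) with hM₀def
  have hmapM₀ : M₀.map (QuotientGroup.mk' J₂) = Mbar :=
    Subgroup.map_comap_eq_self_of_surjective (QuotientGroup.mk'_surjective J₂) _
  have hJ₂M₀ : J₂ ≤ M₀ := by
    intro x hx
    have : QuotientGroup.mk' J₂ x = 1 := by
      rw [← MonoidHom.mem_ker, QuotientGroup.ker_mk']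
      exact hx
    simp only [hM₀def, Subgroup.mem_comap, this]
    exact Mbar.one_mem
  refine ⟨M₀.map N.subtype, ?_, ?_, ?_⟩
  · -- π-group
    have hcardM₀ : Nat.card ↥M₀ = Nat.card ↥Mbar * Nat.card ↥J₂ := by
      have := card_comap_of_surjective (QuotientGroup.mk' J₂)
        (QuotientGroup.mk'_surjective J₂) Mbar
      rwa [QuotientGroup.ker_mk'] at this
    have hcardJ₂ : Nat.card ↥J₂ = Nat.card ↥J := by
      rw [hJ₂def, Nat.card_congr (Subgroup.subgroupOfEquivOfLe hJ'N).toEquiv, hJ'def,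
        ← Nat.card_congr (J.equivMapOfInjective f.ker.subtype
          (Subgroup.subtype_injective _)).toEquiv]
    intro q hq hd
    rw [← Nat.card_congr (M₀.equivMapOfInjective N.subtype
      (Subgroup.subtype_injective _)).toEquiv, hcardM₀, hcardJ₂] at hd
    exact pi_of_mul hMbarpi hJpi q hq hd
  · -- contains J'
    intro x hx
    refine ⟨⟨x, hJ'N hx⟩, hJ₂M₀ (show (⟨x, hJ'N hx⟩ : ↥N) ∈ J₂ from hx), rfl⟩
  · -- maps onto H
    have hcomp : fbar.comp (QuotientGroup.mk' J₂) = f₁ := by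
      ext x
      simp [hfbardef]
    rw [Subgroup.map_map, ← hf₁def]
    rw [← hcomp, ← Subgroup.map_map, hmapM₀, hMbartop]
end

section
/- Let G and H be finite groups with H solvable, and let f : G → H be a surjective group homomorphism with kernel K. Let J be an intravariant solvable subgroup of K. Then there exists a solvable subgroup M of G with J ≤ M and f(M) = H. -/
open Subgroup

theorem solvable_of_mulEquiv {A B : Type*} [Group A] [Group B] (e : A ≃* B)
    (h : IsSolvable A) : IsSolvable B := by
  haveI : Group.IsSolvable A := h
  exact solvable_of_solvable_injective (f := e.symm.toMonoidHom) e.symm.injective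

/-- If a finite group surjects onto a solvable group, some solvable subgroup
already surjects. -/
theorem aux_supplement : ∀ (n : ℕ) (X : Type*) [Group X] [Finite X]
    (H : Type*) [Group H] (φ : X →* H), Nat.card X ≤ n →
    Function.Surjective φ → IsSolvable H →
    ∃ M : Subgroup X, IsSolvable ↥M ∧ M.map φ = ⊤ := by
  intro n
  induction n with
  | zero => intro X _ _ H _ φ hn _ _; have := Nat.card_pos (α := X); omega
  | succ n ih =>
    intro X _ _ H _ φ hn hφ hH
    by_cases hex : ∃ M : Subgroup X, M ≠ ⊤ ∧ M.map φ = ⊤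
    · obtain ⟨M, hMne, hMmap⟩ := hex
      have hφ' : Function.Surjective (φ.comp M.subtype) := by
        rw [← MonoidHom.range_eq_top, MonoidHom.range_comp, Subgroup.range_subtype]
        exact hMmap
      have hcard : Nat.card ↥M ≤ n := by
        have h1 : Nat.card ↥M ≤ Nat.card X := Subgroup.card_le_card_group M
        have h2 : Nat.card ↥M ≠ Nat.card X := fun h => hMne (Subgroup.eq_top_of_card_eq M h)
        omega
      obtain ⟨M', hM'solv, hM'map⟩ := ih ↥M H (φ.comp M.subtype) hcard hφ' hH
      refine ⟨M'.map M.subtype, ?_, ?_⟩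
      · exact solvable_of_mulEquiv (M'.equivMapOfInjective M.subtype M.subtype_injective) hM'solv
      · rw [Subgroup.map_map]; exact hM'map
    · push_neg at hex
      -- every subgroup mapping onto ⊤ is ⊤; hence ker φ ≤ frattini X and X is solvable
      have hker : φ.ker ≤ frattini X := by
        refine le_iInf₂ fun C hC => ?_
        by_contra hnle
        have hsup : C ⊔ φ.ker = ⊤ := hC.2 _ (lt_of_le_of_ne le_sup_left
          (fun h => hnle (h ▸ le_sup_right)))
        have : C.map φ = ⊤ := by
          have := congrArg (Subgroup.map φ) hsup
          rwa [Subgroup.map_sup, (Subgroup.map_eq_bot_iff _).mpr le_rfl, sup_bot_eq,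
            ← MonoidHom.range_eq_map, MonoidHom.range_eq_top.mpr hφ] at this
        exact hex C hC.1 this
      have hfrat : Group.IsSolvable ↥(frattini X) :=
        @IsNilpotent.to_isSolvable _ _ frattini_nilpotent
      have hkersolv : Group.IsSolvable ↥φ.ker :=
        solvable_of_mulEquiv (Subgroup.subgroupOfEquivOfLe hker) (inferInstance : Group.IsSolvable _)
      have hX : IsSolvable X :=
        solvable_of_ker_le_range (hG' := hkersolv) (hG'' := hH) φ.ker.subtype φ (by rw [Subgroup.range_subtype])
      refine ⟨⊤, ?_, ?_⟩
      · exact solvable_of_mulEquiv (Subgroup.topEquiv (G := X)).symm hX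
      · rw [← MonoidHom.range_eq_map, MonoidHom.range_eq_top.mpr hφ]

theorem exists_solvable_subgroup_mapping_onto_containing_intravariant
    (G H : Type*) [Group G] [Finite G] [Group H] [Finite H]
    (f : G →* H) (hf : Function.Surjective f) (hH : IsSolvable H)
    (J : Subgroup ↥f.ker) (hJint : IsIntravariant J) (hJsolv : IsSolvable ↥J) :
    ∃ M : Subgroup G, IsSolvable ↥M ∧ J.map f.ker.subtype ≤ M ∧ M.map f = ⊤ := by
  set JG : Subgroup G := J.map f.ker.subtype with hJG
  have hJGker : JG ≤ f.ker := Subgroup.map_subtype_le J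
  -- Frattini-type argument from intravariance
  have hfrat : ∀ g : G, ∃ k : ↥f.ker, (↑k)⁻¹ * g ∈ normalizer (JG : Set G) := by
    intro g
    obtain ⟨k, hk⟩ := hJint (MulAut.conjNormal g)
    refine ⟨k, ?_⟩
    have h1 : JG.map (MulAut.conj g).toMonoidHom =
        (J.map (MulAut.conjNormal g : MulAut ↥f.ker).toMonoidHom).map f.ker.subtype := by
      rw [hJG, Subgroup.map_map, Subgroup.map_map]
      congr 1
    have h2 : JG.map (MulAut.conj ((k : G))).toMonoidHom =
        (J.map (MulAut.conj k).toMonoidHom).map f.ker.subtype := by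
      rw [hJG, Subgroup.map_map, Subgroup.map_map]
      congr 1
    have hE : JG.map (MulAut.conj g).toMonoidHom
        = JG.map (MulAut.conj ((k : G))).toMonoidHom := by rw [h1, h2, hk]
    rw [Subgroup.mem_normalizer_iff]
    intro h
    have key : ((k:G))⁻¹ * g * h * (((k:G))⁻¹ * g)⁻¹
        = (MulAut.conj ((k:G))).symm (g * h * g⁻¹) := by
      simp [MulAut.conj_symm_apply, mul_assoc]
    constructor
    · intro hh
      rw [key, ← Subgroup.mem_map_equiv, ← hE, Subgroup.mem_map_equiv]
      simpa [MulAut.conj_symm_apply, mul_assoc] using hh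
    · intro hh
      rw [key, ← Subgroup.mem_map_equiv, ← hE, Subgroup.mem_map_equiv] at hh
      simpa [MulAut.conj_symm_apply, mul_assoc] using hh
  set N : Subgroup G := normalizer (JG : Set G) with hN
  have hJGN : JG ≤ N := Subgroup.le_normalizer
  set J' : Subgroup ↥N := JG.subgroupOf N with hJ'
  haveI : J'.Normal := Subgroup.normal_in_normalizer
  set ψ : ↥N →* H := f.comp N.subtype with hψ
  have hle : ∀ x ∈ J', ψ x = 1 := by
    intro x hx
    have : (x : G) ∈ f.ker := hJGker (by rwa [hJ', Subgroup.mem_subgroupOf] at hx)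
    simpa [hψ] using this
  set φ : (↥N ⧸ J') →* H := QuotientGroup.lift J' ψ hle with hφ
  have hφsurj : Function.Surjective φ := by
    intro h
    obtain ⟨g, hg⟩ := hf h
    obtain ⟨k, hkN⟩ := hfrat g
    refine ⟨QuotientGroup.mk' J' ⟨(↑k)⁻¹ * g, hkN⟩, ?_⟩
    have hk1 : f (k : G) = 1 := k.2
    simp [hφ, hψ, QuotientGroup.lift_mk', hk1, hg]
  obtain ⟨Xb, hXbsolv, hXbmap⟩ :=
    aux_supplement (Nat.card (↥N ⧸ J')) (↥N ⧸ J') H φ le_rfl hφsurj hH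
  set M₀ : Subgroup ↥N := Xb.comap (QuotientGroup.mk' J') with hM₀
  have hJ'M₀ : J' ≤ M₀ := by
    intro x hx
    have hx1 : QuotientGroup.mk' J' x = 1 := by
      rw [← MonoidHom.mem_ker, QuotientGroup.ker_mk']; exact hx
    rw [hM₀, Subgroup.mem_comap, hx1]
    exact Xb.one_mem
  -- solvability of M₀
  haveI hJGsolv : IsSolvable ↥JG :=
    solvable_of_mulEquiv (J.equivMapOfInjective f.ker.subtype f.ker.subtype_injective) hJsolv
  haveI hJ'solv : IsSolvable ↥J' :=
    solvable_of_mulEquiv (Subgroup.subgroupOfEquivOfLe hJGN).symm hJGsolv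
  haveI := hXbsolv
  have hM₀solv : IsSolvable ↥M₀ := by
    set g' : ↥M₀ →* ↥Xb :=
      ((QuotientGroup.mk' J').comp M₀.subtype).codRestrict Xb (fun x => x.2) with hg'
    set f' : ↥J' →* ↥M₀ := Subgroup.inclusion hJ'M₀ with hf'
    refine solvable_of_ker_le_range (hG' := hJ'solv) (hG'' := hXbsolv) f' g' ?_
    intro x hx
    have hx1 : QuotientGroup.mk' J' (x : ↥N) = 1 := by
      have := congrArg (Subtype.val) (MonoidHom.mem_ker.mp hx)
      exact this
    have hxJ : (x : ↥N) ∈ J' := by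
      rw [← QuotientGroup.ker_mk' J']; exact hx1
    exact ⟨⟨(x : ↥N), hxJ⟩, Subtype.ext rfl⟩
  refine ⟨M₀.map N.subtype, ?_, ?_, ?_⟩
  · exact solvable_of_mulEquiv (M₀.equivMapOfInjective N.subtype N.subtype_injective) hM₀solv
  · intro x hx
    have hxN : x ∈ N := hJGN hx
    have hxJ' : (⟨x, hxN⟩ : ↥N) ∈ J' := by rw [hJ', Subgroup.mem_subgroupOf]; exact hx
    exact ⟨⟨x, hxN⟩, hJ'M₀ hxJ', rfl⟩
  · have e1 : (M₀.map N.subtype).map f = M₀.map ψ := by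
      rw [Subgroup.map_map]
    have e2 : ψ = φ.comp (QuotientGroup.mk' J') := by
      ext x
      simp [hφ, QuotientGroup.lift_mk']
      rfl
    rw [e1, e2, ← Subgroup.map_map, hM₀,
      Subgroup.map_comap_eq_self_of_surjective (QuotientGroup.mk'_surjective J') Xb, hXbmap]
end

section
/- Let n ≥ 5 be odd and let R be a Sylow 2-subgroup of the alternating group Alt_n acting naturally on a set of size n. Then the orbits of R have pairwise distinct cardinalities, each orbit has cardinality a power of 2, and the number of orbits of R is at most log₂(n) + 1. -/
open MulAction Equiv

section AuxNumberTheory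

lemma aux_fact2pow (a : ℕ) : (Nat.factorial (2 ^ a)).factorization 2 = 2 ^ a - 1 := by
  induction a with
  | zero => simp
  | succ a ih =>
      have h2 : Fact (Nat.Prime 2) := ⟨Nat.prime_two⟩
      have : (2 : ℕ) ^ (a+1) = 2 * 2 ^ a := by ring
      rw [this, Nat.factorization_def _ Nat.prime_two,
        padicValNat_factorial_mul, ← Nat.factorization_def _ Nat.prime_two, ih]
      have := Nat.one_le_two_pow (n := a)
      omega

lemma aux_prod_fact_factorization {Ω : Type*} [Fintype Ω] (m : Ω → ℕ) :
    (∏ k : Ω, Nat.factorial (m k)).factorization 2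
      = ∑ k : Ω, (Nat.factorial (m k)).factorization 2 := by
  rw [Nat.factorization_prod (fun k _ => Nat.factorial_ne_zero (m k))]
  rw [Finsupp.coe_finset_sum]
  exact Finset.sum_apply _ _ _

/-- If a partition of `n` into `2`-powers satisfies that the product of the factorials of
its parts contains the full `2`-part of `n!`, then the parts are pairwise distinct. -/
lemma aux_two_pow_inj {Ω : Type*} [Fintype Ω] (n : ℕ) (m : Ω → ℕ)
    (hpow : ∀ ω, ∃ a, m ω = 2 ^ a) (hsum : ∑ ω, m ω = n)
    (h2T : 2 ^ ((Nat.factorial n).factorization 2) ∣ ∏ ω, Nat.factorial (m ω)) :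
    Function.Injective m := by
  classical
  intro ω ω' h
  by_contra hne
  choose a ha using hpow
  set fn := (Nat.factorial n).factorization 2 with hfn
  set F : ℕ → ℕ := fun t => (Nat.factorial t).factorization 2 with hF
  have hT0 : (∏ ω, Nat.factorial (m ω)) ≠ 0 :=
    Finset.prod_ne_zero_iff.mpr fun k _ => Nat.factorial_ne_zero _
  have hνT : fn ≤ ∑ k : Ω, F (m k) := by
    rw [← aux_prod_fact_factorization m]
    exact (Nat.Prime.pow_dvd_iff_le_factorization Nat.prime_two hT0).mp h2T
  set g : Ω → ℕ := Function.update (Function.update m ω' 0) ω (2 ^ (a ω + 1)) with hg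
  have hmem : ω' ∈ Finset.univ \ ({ω} : Finset Ω) := by
    simp [Finset.mem_sdiff, Ne.symm hne]
  have haa : m ω' = 2 ^ (a ω) := by rw [← h, ha ω]
  have hupdsum : ∀ (f : Ω → ℕ) (b : ℕ),
      ∑ k : Ω, Function.update (Function.update f ω' 0) ω b k
        = b + ∑ k ∈ (Finset.univ \ {ω}) \ {ω'}, f k := by
    intro f b
    rw [Finset.sum_update_of_mem (Finset.mem_univ ω)]
    congr 1
    rw [Finset.sum_update_of_mem hmem, zero_add]
  have hmsum : ∀ f : Ω → ℕ,
      ∑ k : Ω, f k = (∑ k ∈ (Finset.univ \ {ω}) \ {ω'}, f k) + f ω' + f ω := by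
    intro f
    rw [Finset.sum_eq_sum_sdiff_singleton_add (Finset.mem_univ ω) f,
      Finset.sum_eq_sum_sdiff_singleton_add hmem f]
  have hgsum : ∑ k : Ω, g k = n := by
    rw [hg, hupdsum m (2 ^ (a ω + 1))]
    have h1 := hmsum m
    rw [hsum] at h1
    have h2 : (2:ℕ) ^ (a ω + 1) = 2 ^ (a ω) + 2 ^ (a ω) := by rw [pow_succ]; ring
    rw [h2, h1, haa, ha ω]
    ring
  have hT' : (∏ k : Ω, Nat.factorial (g k)) ∣ Nat.factorial n := by
    rw [← hgsum]
    exact Nat.prod_factorial_dvd_factorial_sum _ _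
  have hT'0 : (∏ k : Ω, Nat.factorial (g k)) ≠ 0 :=
    Finset.prod_ne_zero_iff.mpr fun k _ => Nat.factorial_ne_zero _
  have hνT' : (∑ k : Ω, F (g k)) ≤ fn := by
    rw [← aux_prod_fact_factorization g]
    exact (Nat.factorization_le_iff_dvd hT'0 (Nat.factorial_ne_zero n)).mpr hT' 2
  have hFg : (F ∘ g) = Function.update (Function.update (F ∘ m) ω' 0) ω
      (F (2 ^ (a ω + 1))) := by
    rw [hg, Function.comp_update, Function.comp_update]
    have : F 0 = 0 := by simp [hF]
    rw [this]
  have hsum1 : ∑ k : Ω, F (g k)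
      = F (2 ^ (a ω + 1)) + ∑ k ∈ (Finset.univ \ {ω}) \ {ω'}, (F ∘ m) k := by
    have : ∀ k : Ω, F (g k) = (F ∘ g) k := fun k => rfl
    rw [Finset.sum_congr rfl fun k _ => this k, hFg]
    exact hupdsum (F ∘ m) _
  have hsum2 : ∑ k : Ω, F (m k)
      = (∑ k ∈ (Finset.univ \ {ω}) \ {ω'}, (F ∘ m) k) + F (m ω') + F (m ω) :=
    hmsum (F ∘ m)
  have e1 : F (2 ^ (a ω + 1)) = 2 ^ (a ω + 1) - 1 := aux_fact2pow _
  have e2 : F (m ω) = 2 ^ (a ω) - 1 := by rw [ha ω]; exact aux_fact2pow _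
  have e3 : F (m ω') = 2 ^ (a ω) - 1 := by rw [haa]; exact aux_fact2pow _
  have hpa : (2:ℕ) ^ (a ω + 1) = 2 ^ (a ω) + 2 ^ (a ω) := by rw [pow_succ]; ring
  have hpos := Nat.one_le_two_pow (n := a ω)
  omega

end AuxNumberTheory

section AuxOrbitsStab

variable {α : Type*} (G : Type*) [Group G] [MulAction G α]

/-- The subgroup of permutations of `α` preserving each `G`-orbit. -/
def orbitsStab : Subgroup (Equiv.Perm α) where
  carrier := {σ | ∀ x, σ x ∈ MulAction.orbit G x}
  one_mem' := fun x => mem_orbit_self x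
  mul_mem' := by
    intro σ τ hσ hτ x
    have h1 : MulAction.orbit G (τ x) = MulAction.orbit G x := orbit_eq_iff.mpr (hτ x)
    have := hσ (τ x); rw [h1] at this; exact this
  inv_mem' := by
    intro σ hσ x
    have h := hσ (σ⁻¹ x)
    rw [show σ (σ⁻¹ x) = x from σ.apply_symm_apply x] at h
    rw [orbit_eq_iff.mpr h]
    exact mem_orbit_self _

lemma aux_mk_apply_eq (σ : Equiv.Perm α) (hσ : σ ∈ orbitsStab G) (x : α) :
    (Quotient.mk'' (σ x) : orbitRel.Quotient G α) = Quotient.mk'' x :=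
  Quotient.eq''.mpr <| by rw [orbitRel_apply]; exact hσ x

lemma aux_mem_orbit_O_iff (σ : Equiv.Perm α) (hσ : σ ∈ orbitsStab G)
    (ω : orbitRel.Quotient G α) (x : α) : x ∈ ω.orbit ↔ σ x ∈ ω.orbit := by
  rw [orbitRel.Quotient.mem_orbit, orbitRel.Quotient.mem_orbit, aux_mk_apply_eq G σ hσ x]

/-- Restriction of an orbit-preserving permutation to each orbit. -/
def restrictOrbits (σ : orbitsStab G (α := α)) (ω : orbitRel.Quotient G α) :
    Equiv.Perm ω.orbit :=
  Equiv.Perm.subtypePerm σ.1 (fun x => (aux_mem_orbit_O_iff G σ.1 σ.2 ω x).symm)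

lemma aux_mem_self_orbit (x : α) :
    x ∈ orbitRel.Quotient.orbit (Quotient.mk'' x : orbitRel.Quotient G α) := by
  rw [orbitRel.Quotient.mem_orbit]

lemma aux_glue_key (f : ∀ ω : orbitRel.Quotient G α, Equiv.Perm ω.orbit)
    (x : α) (ω : orbitRel.Quotient G α) (h : Quotient.mk'' x = ω) (hx : x ∈ ω.orbit) :
    ((f (Quotient.mk'' x) ⟨x, aux_mem_self_orbit G x⟩ : _) : α) = (f ω ⟨x, hx⟩ : α) := by
  subst h; rfl

/-- Gluing a family of permutations of the orbits to a permutation of `α`. -/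
noncomputable def glueOrbits [Finite α]
    (f : ∀ ω : orbitRel.Quotient G α, Equiv.Perm ω.orbit) : Equiv.Perm α := by
  refine Equiv.ofBijective (fun x => (f (Quotient.mk'' x) ⟨x, aux_mem_self_orbit G x⟩ : α))
    (Finite.injective_iff_bijective.mp ?_)
  intro x y hxy
  dsimp only at hxy
  have hx : (Quotient.mk'' ((f (Quotient.mk'' x) ⟨x, aux_mem_self_orbit G x⟩ : _) : α)
      : orbitRel.Quotient G α) = Quotient.mk'' x :=
    orbitRel.Quotient.mem_orbit.mp (Subtype.mem _)
  have hy : (Quotient.mk'' ((f (Quotient.mk'' y) ⟨y, aux_mem_self_orbit G y⟩ : _) : α)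
      : orbitRel.Quotient G α) = Quotient.mk'' y :=
    orbitRel.Quotient.mem_orbit.mp (Subtype.mem _)
  have hω : (Quotient.mk'' x : orbitRel.Quotient G α) = Quotient.mk'' y := by
    rw [← hx, ← hy, hxy]
  rw [aux_glue_key G f x (Quotient.mk'' y) hω (hω ▸ aux_mem_self_orbit G x)] at hxy
  have := (f (Quotient.mk'' y)).injective (Subtype.ext hxy)
  exact congrArg Subtype.val this

lemma glueOrbits_apply [Finite α] (f : ∀ ω : orbitRel.Quotient G α, Equiv.Perm ω.orbit)
    (x : α) : glueOrbits G f x = (f (Quotient.mk'' x) ⟨x, aux_mem_self_orbit G x⟩ : α) := rfl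

lemma glueOrbits_mem [Finite α] (f : ∀ ω : orbitRel.Quotient G α, Equiv.Perm ω.orbit) :
    glueOrbits G f ∈ orbitsStab G := by
  intro x
  have h := Subtype.mem (f (Quotient.mk'' x) ⟨x, aux_mem_self_orbit G x⟩)
  rw [glueOrbits_apply]
  exact h

/-- The group of orbit-preserving permutations is in bijection with the product of the
permutation groups of the orbits. -/
noncomputable def orbitsStabEquiv [Finite α] :
    (orbitsStab G (α := α)) ≃ ∀ ω : orbitRel.Quotient G α, Equiv.Perm ω.orbit where
  toFun := restrictOrbits G
  invFun f := ⟨glueOrbits G f, glueOrbits_mem G f⟩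
  left_inv σ := Subtype.ext (Equiv.ext fun x => rfl)
  right_inv f := by
    funext ω
    refine Equiv.ext fun y => Subtype.ext ?_
    have h : (Quotient.mk'' (y : α) : orbitRel.Quotient G α) = ω :=
      orbitRel.Quotient.mem_orbit.mp y.2
    have := aux_glue_key G f (y : α) ω h y.2
    calc (restrictOrbits G ⟨glueOrbits G f, glueOrbits_mem G f⟩ ω y : α)
        = glueOrbits G f (y : α) := rfl
      _ = (f ω ⟨(y : α), y.2⟩ : α) := by rw [glueOrbits_apply, this]
      _ = (f ω y : α) := rfl

lemma aux_card_perm_of_finite (β : Type*) [Finite β] :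
    Nat.card (Equiv.Perm β) = Nat.factorial (Nat.card β) := by
  letI := Fintype.ofFinite β
  letI := Classical.decEq β
  rw [Nat.card_eq_fintype_card, Nat.card_eq_fintype_card, Fintype.card_perm]

lemma aux_card_orbitsStab [Finite α] [Fintype (orbitRel.Quotient G α)] :
    Nat.card (orbitsStab G (α := α))
      = ∏ ω : orbitRel.Quotient G α, Nat.factorial (Nat.card ω.orbit) := by
  rw [Nat.card_congr (orbitsStabEquiv G), Nat.card_pi]
  exact Finset.prod_congr rfl fun ω _ => aux_card_perm_of_finite _

end AuxOrbitsStab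

theorem sylow_two_orbits_of_alternating_odd_degree
    (n : ℕ) (hn : 5 ≤ n) (hodd : Odd n)
    (R : Sylow 2 ↥(alternatingGroup (Fin n))) :
    (∀ x y : Fin n,
        Nat.card (MulAction.orbit ↥(R : Subgroup ↥(alternatingGroup (Fin n))) x) =
          Nat.card (MulAction.orbit ↥(R : Subgroup ↥(alternatingGroup (Fin n))) y) →
        MulAction.orbit ↥(R : Subgroup ↥(alternatingGroup (Fin n))) x =
          MulAction.orbit ↥(R : Subgroup ↥(alternatingGroup (Fin n))) y) ∧
    (∀ x : Fin n, ∃ k : ℕ,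
        Nat.card (MulAction.orbit ↥(R : Subgroup ↥(alternatingGroup (Fin n))) x) = 2 ^ k) ∧
    Nat.card
        (MulAction.orbitRel.Quotient ↥(R : Subgroup ↥(alternatingGroup (Fin n))) (Fin n)) ≤
      Nat.log 2 n + 1 := by
  classical
  set PG : Subgroup ↥(alternatingGroup (Fin n)) := ↑R with hPG
  set Ω := orbitRel.Quotient ↥PG (Fin n) with hΩ
  letI : Fintype Ω := Fintype.ofFinite _
  set fn := (Nat.factorial n).factorization 2 with hfn
  -- cardinality of the alternating group and of the Sylow subgroup
  haveI hnt : Nontrivial (Fin n) :=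
    ⟨⟨0, by omega⟩, ⟨1, by omega⟩, by simp [Fin.ext_iff]⟩
  have h2A : 2 * Nat.card ↥(alternatingGroup (Fin n)) = Nat.factorial n := by
    rw [Nat.card_eq_fintype_card, two_mul_card_alternatingGroup, Fintype.card_perm,
      Fintype.card_fin]
  have hA0 : Nat.card ↥(alternatingGroup (Fin n)) ≠ 0 := Nat.card_pos.ne'
  have hfactA : (Nat.card ↥(alternatingGroup (Fin n))).factorization 2 = fn - 1 := by
    have h := congrArg (fun t => t.factorization 2) h2A.symm
    rw [Nat.factorization_mul two_ne_zero hA0, Finsupp.add_apply,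
      Nat.Prime.factorization Nat.prime_two, Finsupp.single_eq_same] at h
    omega
  have hfn3 : 3 ≤ fn := by
    have h120 : Nat.factorial 5 ∣ Nat.factorial n := Nat.factorial_dvd_factorial hn
    have h8 : (2:ℕ) ^ 3 ∣ Nat.factorial n := dvd_trans (by norm_num [Nat.factorial]) h120
    exact (Nat.Prime.pow_dvd_iff_le_factorization Nat.prime_two
      (Nat.factorial_ne_zero n)).mp h8
  have hcardP : Nat.card ↥PG = 2 ^ (fn - 1) := by
    rw [hPG, R.card_eq_multiplicity, hfactA]
  -- orbit sizes
  set m : Ω → ℕ := fun ω => Nat.card ω.orbit with hm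
  have horbcard : ∀ x : Fin n, Nat.card (orbit ↥PG x) ∣ Nat.card ↥PG := by
    intro x
    rw [Nat.card_congr (MulAction.orbitEquivQuotientStabilizer ↥PG x),
      ← Subgroup.index_eq_card]
    exact Subgroup.index_dvd_card _
  have hm_orbit : ∀ ω : Ω, orbitRel.Quotient.orbit ω = orbit ↥PG (Quotient.out ω) :=
    fun ω => orbitRel.Quotient.orbit_eq_orbit_out ω Quotient.out_eq'
  have hm_pow : ∀ ω : Ω, ∃ a : ℕ, m ω = 2 ^ a := by
    intro ω
    have : m ω ∣ 2 ^ (fn - 1) := by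
      rw [hm]
      simp only
      rw [hm_orbit ω, ← hcardP]
      exact horbcard _
    obtain ⟨a, -, ha⟩ := (Nat.dvd_prime_pow Nat.prime_two).mp this
    exact ⟨a, ha⟩
  letI : ∀ ω : Ω, Fintype (orbitRel.Quotient.orbit ω) := fun ω => Fintype.ofFinite _
  have hsum : ∑ ω : Ω, m ω = n := by
    have h := Nat.card_congr (selfEquivSigmaOrbits' ↥PG (Fin n))
    rw [Nat.card_eq_fintype_card, Nat.card_eq_fintype_card, Fintype.card_fin,
      Fintype.card_sigma] at h
    rw [hm]
    simp only
    calc ∑ ω : Ω, Nat.card (orbitRel.Quotient.orbit ω)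
        = ∑ ω : Ω, Fintype.card (orbitRel.Quotient.orbit ω) :=
          Finset.sum_congr rfl fun ω _ => Nat.card_eq_fintype_card
      _ = n := h.symm
  -- the 2-part of `n!` divides the product of factorials of the orbit sizes
  set H : Subgroup (Equiv.Perm (Fin n)) := orbitsStab ↥PG (α := Fin n) with hH
  have h2T : 2 ^ fn ∣ ∏ ω : Ω, Nat.factorial (m ω) := by
    haveI : Nontrivial ↥PG := by
      rw [← Finite.one_lt_card_iff_nontrivial, hcardP]
      exact Nat.one_lt_two_pow (by omega)
    obtain ⟨g, hg⟩ := exists_ne (1 : ↥PG)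
    have hgx : ∃ x : Fin n, g • x ≠ x := by
      by_contra hc
      push_neg at hc
      apply hg
      have : ((g : ↥(alternatingGroup (Fin n))) : Equiv.Perm (Fin n)) = 1 :=
        Equiv.ext fun x => hc x
      exact Subtype.ext (Subtype.ext this)
    obtain ⟨x, hx⟩ := hgx
    set y := g • x with hy
    have hyx : y ∈ MulAction.orbit ↥PG x := mem_orbit x g
    have hxy : x ∈ MulAction.orbit ↥PG y := ⟨g⁻¹, by rw [hy]; simp⟩
    have hswap : Equiv.swap x y ∈ H := by
      intro z
      rcases eq_or_ne z x with rfl | hzx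
      · rw [Equiv.swap_apply_left]
        exact hyx
      rcases eq_or_ne z y with rfl | hzy
      · rw [Equiv.swap_apply_right]
        exact hxy
      · rw [Equiv.swap_apply_of_ne_of_ne hzx hzy]
        exact mem_orbit_self _
    set s : ↥H →* ℤˣ := Equiv.Perm.sign.comp H.subtype with hs
    have hssurj : Function.Surjective s := by
      intro u
      rcases Int.units_eq_one_or u with rfl | rfl
      · exact ⟨1, map_one s⟩
      · refine ⟨⟨Equiv.swap x y, hswap⟩, ?_⟩
        rw [hs]
        simp only [MonoidHom.comp_apply, Subgroup.coe_subtype]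
        rw [Equiv.Perm.sign_swap hx.symm]
    have hcardH : Nat.card ↥H = 2 * Nat.card s.ker := by
      rw [Subgroup.card_eq_card_quotient_mul_card_subgroup s.ker,
        Nat.card_congr (QuotientGroup.quotientKerEquivOfSurjective s hssurj).toEquiv,
        Nat.card_eq_fintype_card]
      norm_num
    set ι : ↥PG →* Equiv.Perm (Fin n) :=
      ((alternatingGroup (Fin n)).subtype).comp PG.subtype with hι
    have hιH : ∀ p : ↥PG, ι p ∈ H := by
      intro p z
      exact mem_orbit z p
    have hsign : ∀ p : ↥PG, ((ι.codRestrict H hιH) p) ∈ s.ker := by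
      intro p
      rw [MonoidHom.mem_ker, hs]
      simp only [MonoidHom.comp_apply, Subgroup.coe_subtype, MonoidHom.codRestrict_apply]
      exact (p : ↥(alternatingGroup (Fin n))).2
    set ψ : ↥PG →* ↥s.ker := (ι.codRestrict H hιH).codRestrict s.ker hsign with hψ
    have hψinj : Function.Injective ψ := by
      intro a b hab
      have : ι a = ι b := congrArg (fun t : ↥s.ker => ((t : ↥H) : Equiv.Perm (Fin n))) hab
      have h2 : (a : ↥(alternatingGroup (Fin n))) = b := Subtype.ext this
      exact Subtype.ext h2
    have hdvd : Nat.card ↥PG ∣ Nat.card s.ker := Subgroup.card_dvd_of_injective ψ hψinj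
    have hcardHT : Nat.card ↥H = ∏ ω : Ω, Nat.factorial (m ω) :=
      aux_card_orbitsStab ↥PG
    rw [← hcardHT, hcardH]
    calc (2:ℕ) ^ fn = 2 * 2 ^ (fn - 1) := by
          rw [← pow_succ']
          congr 1
          omega
      _ ∣ 2 * Nat.card s.ker := mul_dvd_mul_left 2 (hcardP ▸ hdvd)
  -- the key injectivity
  have hminj : Function.Injective m := aux_two_pow_inj n m hm_pow hsum h2T
  refine ⟨?_, ?_, ?_⟩
  · -- orbits with equal cardinality coincide
    intro x y hcard
    have hq : (Quotient.mk'' x : Ω) = Quotient.mk'' y := hminj hcard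
    have hrel : x ∈ MulAction.orbit ↥PG y := by
      have := Quotient.eq''.mp hq
      rwa [orbitRel_apply] at this
    exact orbit_eq_iff.mpr hrel
  · -- orbit sizes are powers of two
    intro x
    exact hm_pow (Quotient.mk'' x)
  · -- number of orbits
    choose a ha using hm_pow
    have hmle : ∀ ω : Ω, m ω ≤ n := by
      intro ω
      have h1 : Nat.card (orbitRel.Quotient.orbit ω) ≤ Nat.card (Fin n) :=
        Nat.card_le_card_of_injective _ Subtype.val_injective
      simpa [hm, Nat.card_eq_fintype_card] using h1
    have hale : ∀ ω : Ω, a ω ≤ Nat.log 2 n := by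
      intro ω
      have h1 : 2 ^ (a ω) ≤ n := (ha ω) ▸ hmle ω
      exact (Nat.le_log_iff_pow_le one_lt_two (by omega)).mpr h1
    set u : Ω → Fin (Nat.log 2 n + 1) := fun ω => ⟨a ω, by have := hale ω; omega⟩ with hu
    have huinj : Function.Injective u := by
      intro ω ω' huu
      apply hminj
      rw [ha ω, ha ω']
      have : a ω = a ω' := congrArg Fin.val huu
      rw [this]
    have := Nat.card_le_card_of_injective u huinj
    rwa [Nat.card_eq_fintype_card (α := Fin (Nat.log 2 n + 1)), Fintype.card_fin] at this
end
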